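/- For all n ≥ 1, B_n ≥ C_{n-1}, where B_1 = 1, B_n = Σ_{k=0}^{n-1} (k/(n-1))·binomial(2n-k-3, n-k-1)·C_k for n > 1, and C_k is the k-th Catalan number. -/

import Mathlib

/-- Planar binary trees. -/
inductive PBTree : Type
  | leaf : PBTree
  | node : PBTree → PBTree → PBTree
  deriving DecidableEq, Repr

namespace PBTree

instance : Inhabited PBTree := ⟨leaf⟩

/-- Number of internal nodes. -/
def size : PBTree → ℕ
  | leaf => 0
  | node l r => l.size + r.size + 1

/-- Number of leaves. -/
def nleaves : PBTree → ℕ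
  | leaf => 1
  | node l r => l.nleaves + r.nleaves

end PBTree

/-- Planar binary trees with `Bool`-labelled internal nodes; a label `true` means the
node belongs to the distinguished upper order ideal.  Bi-leveled trees are the labelled
trees satisfying `isBL` below. -/
inductive LTree : Type
  | leaf : LTree
  | node : LTree → Bool → LTree → LTree
  deriving DecidableEq, Repr

namespace LTree

instance : Inhabited LTree := ⟨leaf⟩

def size : LTree → ℕ
  | leaf => 0
  | node l _ r => l.size + r.size + 1

def nleaves : LTree → ℕ
  | leaf => 1
  | node l _ r => l.nleaves + r.nleaves

/-- Forget the labels. -/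
def forget : LTree → PBTree
  | leaf => PBTree.leaf
  | node l _ r => PBTree.node l.forget r.forget

/-- All labels are `false`. -/
def allFalse : LTree → Bool
  | leaf => true
  | node l b r => !b && l.allFalse && r.allFalse

/-- The set of `true` nodes forms an upper order ideal of the node poset
(each node is below its parent; the root is maximal). -/
def isUpperIdeal : LTree → Bool
  | leaf => true
  | node l b r => if b then l.isUpperIdeal && r.isUpperIdeal else l.allFalse && r.allFalse

/-- The leftmost node is labelled `true` and is a minimal element of the ideal,
i.e. its descendants are all labelled `false`.  (Vacuously true for the empty tree.) -/
def leftmostMin : LTree → Bool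
  | leaf => true
  | node leaf b r => b && r.allFalse
  | node l _ _ => leftmostMin l

/-- `b` is a bi-leveled tree: the `true` nodes form an upper order ideal containing
the leftmost node as a minimal element. -/
def isBL (b : LTree) : Prop := b.isUpperIdeal = true ∧ b.leftmostMin = true

end LTree

/-- The number of bi-leveled trees with `n` (internal) nodes. -/
noncomputable def blCount (n : ℕ) : ℕ :=
  {b : LTree | LTree.isBL b ∧ b.size = n}.ncard

open PowerSeries

/-- Composition of formal power series (valid when `g` has zero constant term):
the `N`-th coefficient of `f ∘ g` is `∑_{n ≤ N} f_n · [q^N](g^n)`. -/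
noncomputable def psComp (f g : PowerSeries ℚ) : PowerSeries ℚ :=
  PowerSeries.mk fun N => ∑ n ∈ Finset.range (N + 1),
    (PowerSeries.coeff n f) * PowerSeries.coeff N (g ^ n)

/-- The Catalan generating function `Y(q) = ∑ C_n q^n`. -/
noncomputable def Yser : PowerSeries ℚ := PowerSeries.mk fun n => (catalan n : ℚ)

/-- The generating function `M(q) = ∑ A_n q^n` of bi-leveled trees. -/
noncomputable def Mser : PowerSeries ℚ := PowerSeries.mk fun n => (blCount n : ℚ)

/-- The numbers `B n`: `B 1 = 1` and for `n > 1`,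
`B n = ∑_{k=0}^{n-1} (k/(n-1)) · C(2n-k-3, n-k-1) · C_k`. -/
noncomputable def Bnum : ℕ → ℚ := fun n =>
  if n = 1 then 1
  else if 2 ≤ n then
    ∑ k ∈ Finset.range n,
      ((k : ℚ) / ((n : ℚ) - 1)) * (Nat.choose (2 * n - k - 3) (n - k - 1) : ℚ) * (catalan k : ℚ)
  else 0

/-- For all `n ≥ 1`, `B n ≥ C_{n-1}`. -/
theorem B_ge_catalan : ∀ n : ℕ, 1 ≤ n → (catalan (n - 1) : ℚ) ≤ Bnum n := by
  intro n hn
  rcases eq_or_lt_of_le hn with h | h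
  · simp [← h, Bnum]
  · have h2 : 2 ≤ n := h
    unfold Bnum
    rw [if_neg (by omega), if_pos h2]
    have hpos : (0:ℚ) < (n:ℚ) - 1 := by
      have : (2:ℚ) ≤ (n:ℚ) := by exact_mod_cast h2
      linarith
    have hmem : n - 1 ∈ Finset.range n := Finset.mem_range.mpr (by omega)
    have hle := Finset.single_le_sum
      (f := fun k : ℕ => ((k : ℚ) / ((n : ℚ) - 1)) *
        (Nat.choose (2 * n - k - 3) (n - k - 1) : ℚ) * (catalan k : ℚ))
      (fun i _ => by
        have h1 : (0:ℚ) ≤ (i : ℚ) / ((n : ℚ) - 1) := div_nonneg (by positivity) hpos.le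
        positivity) hmem
    refine le_trans (le_of_eq ?_) hle
    have e1 : 2 * n - (n - 1) - 3 = n - 2 := by omega
    have e2 : n - (n - 1) - 1 = 0 := by omega
    rw [e1, e2, Nat.choose_zero_right]
    have : ((n - 1 : ℕ) : ℚ) = (n : ℚ) - 1 := by
      have : 1 ≤ n := hn; push_cast [this]; ring
    rw [this, div_self (ne_of_gt hpos)]
    ring
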